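/- Let π^ε = π₁^{ε₁}⋯πₙ^{εₙ} be a permutation in the clean compact peg basis of B̂_k^{rd}. Then the first entry π₁^{ε₁} is not 1 decorated + or •, and the last entry πₙ^{εₙ} is not n decorated + or •. -/

import Mathlib

/-! ## Basic definitions: permutations as lists, reversals, distances -/

/-- Decorations for peg permutations: `+`, `-`, `•`. -/
inductive Deco where
  | plus : Deco
  | minus : Deco
  | dot : Deco
deriving DecidableEq, Repr

/-- A peg permutation: a list of entries together with decorations. -/
abbrev PegPerm := List (ℕ × Deco)

def pegDefault : ℕ × Deco := (0, Deco.dot)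

/-- The identity permutation `1 2 ⋯ n` as a list. -/
def idPerm (n : ℕ) : List ℕ := List.range' 1 n

/-- A list of naturals is a permutation (of `1,…,n` where `n` is its length). -/
def IsPermList (π : List ℕ) : Prop := π.Perm (idPerm π.length)

/-- Reverse the segment of a list from (0-indexed) position `i` to `j` inclusive. -/
def segReverse {α : Type*} (l : List α) (i j : ℕ) : List α :=
  l.take i ++ ((l.drop i).take (j + 1 - i)).reverse ++ l.drop (j + 1)

/-- One reversal step on permutations (reverse a segment of length at least 2). -/
def RevStep (l l' : List ℕ) : Prop :=
  ∃ i j, i < j ∧ j < l.length ∧ l' = segReverse l i j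

/-- One prefix reversal step on permutations (reverse a prefix of length at least 2). -/
def PrefRevStep (l l' : List ℕ) : Prop :=
  ∃ j, 0 < j ∧ j < l.length ∧ l' = segReverse l 0 j

/-- Reachability in exactly `k` steps of the step relation `step`. -/
def ReachIn {α : Type*} (step : α → α → Prop) : ℕ → α → α → Prop
  | 0, x, y => x = y
  | k + 1, x, y => ∃ z, step x z ∧ ReachIn step k z y

/-- The reversal distance of a permutation from the identity. -/
noncomputable def rd (π : List ℕ) : ℕ :=
  sInf {k | ReachIn RevStep k π (idPerm π.length)}

/-- The prefix reversal distance of a permutation from the identity. -/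
noncomputable def prd (π : List ℕ) : ℕ :=
  sInf {k | ReachIn PrefRevStep k π (idPerm π.length)}

/-- The ball of radius `k` in the reversal model. -/
def Brd (k : ℕ) : Set (List ℕ) := {π | IsPermList π ∧ rd π ≤ k}

/-- The ball of radius `k` in the prefix reversal model. -/
def Bprd (k : ℕ) : Set (List ℕ) := {π | IsPermList π ∧ prd π ≤ k}

/-! ## Peg permutations: oriented reversals and distances -/

def flipDeco : Deco → Deco
  | Deco.plus => Deco.minus
  | Deco.minus => Deco.plus
  | Deco.dot => Deco.dot

/-- Oriented reversal of the segment from position `i` to `j` (0-indexed) of a peg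
permutation: the segment is reversed and the decorations `+`, `-` are swapped. -/
def pegSegReverse (l : PegPerm) (i j : ℕ) : PegPerm :=
  l.take i ++ (((l.drop i).take (j + 1 - i)).map (fun p => (p.1, flipDeco p.2))).reverse
    ++ l.drop (j + 1)

/-- One oriented reversal step on peg permutations. -/
def PegRevStep (l l' : PegPerm) : Prop :=
  ∃ i j, i ≤ j ∧ j < l.length ∧ l' = pegSegReverse l i j

/-- One oriented prefix reversal step on peg permutations. -/
def PegPrefRevStep (l l' : PegPerm) : Prop :=
  ∃ j, j < l.length ∧ l' = pegSegReverse l 0 j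

/-- The underlying list of a peg permutation is a permutation. -/
def IsPegPermList (l : PegPerm) : Prop := IsPermList (l.map Prod.fst)

/-- An identity peg permutation: underlying identity, every decoration `+` or `•`. -/
def IsIdPeg (l : PegPerm) : Prop :=
  l.map Prod.fst = idPerm l.length ∧ ∀ p ∈ l, p.2 ≠ Deco.minus

/-- The reversal distance of a peg permutation from an identity peg permutation. -/
noncomputable def pegRd (l : PegPerm) : ℕ :=
  sInf {k | ∃ m, IsIdPeg m ∧ ReachIn PegRevStep k l m}

/-- The prefix reversal distance of a peg permutation from an identity peg permutation. -/
noncomputable def pegPrd (l : PegPerm) : ℕ :=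
  sInf {k | ∃ m, IsIdPeg m ∧ ReachIn PegPrefRevStep k l m}

/-- The ball of radius `k` of peg permutations in the reversal model. -/
def PegBrd (k : ℕ) : Set PegPerm := {l | IsPegPermList l ∧ pegRd l ≤ k}

/-- The ball of radius `k` of peg permutations in the prefix reversal model. -/
def PegBprd (k : ℕ) : Set PegPerm := {l | IsPegPermList l ∧ pegPrd l ≤ k}

/-! ## Patterns -/

/-- Two lists of the same length are order-isomorphic. -/
def OrderIsoList (s t : List ℕ) : Prop :=
  s.length = t.length ∧
  ∀ i j, i < s.length → j < s.length → (s.getD i 0 < s.getD j 0 ↔ t.getD i 0 < t.getD j 0)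

/-- `σ` is a (classical) pattern of `τ`. -/
def IsPattern (σ τ : List ℕ) : Prop :=
  ∃ s, s.Sublist τ ∧ OrderIsoList s σ

/-- `σ` is a peg pattern of `τ`: some subsequence of `τ` is order-isomorphic to `σ`
and whenever an entry of the subsequence is decorated `+` (resp. `-`), the
corresponding entry of `σ` is decorated `+` (resp. `-`). -/
def IsPegPattern (σ τ : PegPerm) : Prop :=
  ∃ s : PegPerm, s.Sublist τ ∧ OrderIsoList (s.map Prod.fst) (σ.map Prod.fst) ∧
    ∀ i, i < s.length →
      ((s.getD i pegDefault).2 = Deco.plus → (σ.getD i pegDefault).2 = Deco.plus) ∧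
      ((s.getD i pegDefault).2 = Deco.minus → (σ.getD i pegDefault).2 = Deco.minus)

/-! ## Strips, clean compact and compact peg permutations -/

/-- Two adjacent entries of a peg permutation lie in a common strip. -/
def StripPair (p q : ℕ × Deco) : Prop :=
  (q.1 = p.1 + 1 ∧ p.2 ≠ Deco.minus ∧ q.2 ≠ Deco.minus) ∨
  (p.1 = q.1 + 1 ∧ p.2 ≠ Deco.plus ∧ q.2 ≠ Deco.plus)

/-- A peg permutation is clean compact when all its strips have length 1, i.e. no two
adjacent entries lie in a common strip. -/
def CleanCompact (l : PegPerm) : Prop :=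
  ∀ i, i + 1 < l.length → ¬ StripPair (l.getD i pegDefault) (l.getD (i + 1) pegDefault)

/-- A peg permutation is compact when every strip has length 1 or consists
exclusively of entries decorated `•`. -/
def CompactPeg (l : PegPerm) : Prop :=
  ∀ i, i + 1 < l.length → StripPair (l.getD i pegDefault) (l.getD (i + 1) pegDefault) →
    (l.getD i pegDefault).2 = Deco.dot ∧ (l.getD (i + 1) pegDefault).2 = Deco.dot

/-! ## The clean compact peg permutation `peg(γ)` associated with a permutation -/

/-- The decomposition of a permutation into maximal monotone strips of adjacent values. -/
def stripGroups (γ : List ℕ) : List (List ℕ) :=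
  γ.splitBy (fun a b => b == a + 1 || a == b + 1)

def stripMin (s : List ℕ) : ℕ := s.foldr min (s.headD 0)

def stripDeco (s : List ℕ) : Deco :=
  if s.length ≤ 1 then Deco.dot
  else if s.headD 0 < s.getLastD 0 then Deco.plus
  else Deco.minus

/-- Rank of `v` among `vals` (used for rescaling). -/
def rankIn (vals : List ℕ) (v : ℕ) : ℕ := (vals.filter (fun w => w ≤ v)).length

/-- The clean compact peg permutation associated with a permutation: replace each
strip by its minimum, decorated `+`/`-`/`•` according to the kind of strip, and rescale. -/
def pegOf (γ : List ℕ) : PegPerm :=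
  (stripGroups γ).map (fun s => (rankIn ((stripGroups γ).map stripMin) (stripMin s), stripDeco s))

/-! ## Monotone inflations and grid classes -/

/-- A legal inflation vector for a peg permutation. -/
def LegalVec (πε : PegPerm) (v : List ℕ) : Prop :=
  v.length = πε.length ∧
  ∀ i, i < πε.length → (πε.getD i pegDefault).2 = Deco.dot → v.getD i 0 ≤ 1

/-- The values of the `i`-th block of the monotone inflation of `πε` through `v`:
an increasing (resp. decreasing) run of `vᵢ` values, occupying the interval of values
determined by the relative order of the entries of `πε`. -/
def blockVals (πε : PegPerm) (v : List ℕ) (i : ℕ) : List ℕ :=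
  let off := (((List.range πε.length).filter
      (fun j => (πε.getD j pegDefault).1 < (πε.getD i pegDefault).1)).map
      (fun j => v.getD j 0)).sum
  if (πε.getD i pegDefault).2 = Deco.minus then (List.range' (off + 1) (v.getD i 0)).reverse
  else List.range' (off + 1) (v.getD i 0)

/-- The monotone inflation `πε[v]`. -/
def inflate (πε : PegPerm) (v : List ℕ) : List ℕ :=
  ((List.range πε.length).map (blockVals πε v)).flatten

/-- The grid class of a peg permutation: all its monotone inflations through legal
inflation vectors. -/
def GridOf (πε : PegPerm) : Set (List ℕ) :=
  {γ | ∃ v, LegalVec πε v ∧ γ = inflate πε v}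

/-- Compatibility of decorations in peg monotone inflations: a `+` entry is inflated by
an identity peg permutation (decorations `+`/`•`), a `-` entry by a reverse identity peg
permutation (decorations `-`/`•`), a `•` entry stays `•`. -/
def DecoOK : Deco → Deco → Prop
  | Deco.plus, d => d ≠ Deco.minus
  | Deco.minus, d => d ≠ Deco.plus
  | Deco.dot, d => d = Deco.dot

/-- The peg grid class of a peg permutation: all its peg monotone inflations. -/
def GridPegOf (πε : PegPerm) : Set PegPerm :=
  {γ | ∃ v, LegalVec πε v ∧ ∃ bs : List PegPerm,
    bs.length = πε.length ∧ γ = bs.flatten ∧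
    ∀ i, i < πε.length →
      (bs.getD i []).map Prod.fst = blockVals πε v i ∧
      ∀ p ∈ bs.getD i [], DecoOK (πε.getD i pegDefault).2 p.2}

/-! ## The inflation `π^ε_I` and the permutation `π̃^ε_I` -/

/-- Canonical peg inflation: every inflated entry keeps the decoration of the
original one. -/
def pegInflate (πε : PegPerm) (v : List ℕ) : PegPerm :=
  ((List.range πε.length).map
    (fun i => (blockVals πε v i).map (fun x => (x, (πε.getD i pegDefault).2)))).flatten

/-- The inflation vector associated with the multiset `I = {i, j}` (0-indexed):
entries `i` and `j` are inflated by one more element each. -/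
def inflVec (n i j : ℕ) : List ℕ :=
  (List.range n).map (fun l => 1 + (if l = i then 1 else 0) + (if l = j then 1 else 0))

/-- `π^ε_I` where `I = {i, j}` with `i ≤ j` 0-indexed. -/
def pegI (πε : PegPerm) (i j : ℕ) : PegPerm := pegInflate πε (inflVec πε.length i j)

/-- `π̃^ε_I`: the result of applying to `π^ε_I` the oriented reversal of the segment
of (0-indexed) positions `i+1, …, j+1`. -/
def pegITilde (πε : PegPerm) (i j : ℕ) : PegPerm := pegSegReverse (pegI πε i j) (i + 1) (j + 1)

/-! ## Clean compact peg bases -/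

/-- The clean compact peg basis of a set `B` of peg permutations: the clean compact
peg permutations not in `B` all of whose proper clean compact peg patterns are in `B`. -/
def CCPegBasis (B : Set PegPerm) : Set PegPerm :=
  {πε | IsPegPermList πε ∧ CleanCompact πε ∧ πε ∉ B ∧
    ∀ γ, IsPegPermList γ → CleanCompact γ → IsPegPattern γ πε → γ ≠ πε → γ ∈ B}

/-! ## The exceptional peg permutations for the prefix reversal model -/

/-- `Θ_e(n)` for even `n`:  `n• (n−2)• ⋯ 4• 2• 1⁺ 3• ⋯ (n−3)• (n−1)•`. -/
def ThetaE (n : ℕ) : PegPerm :=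
  ((List.range (n / 2)).map (fun i => (n - 2 * i, Deco.dot))) ++ [(1, Deco.plus)] ++
  ((List.range (n / 2 - 1)).map (fun i => (3 + 2 * i, Deco.dot)))

/-- `Θ_o(n)` for odd `n`:  `n• (n−2)• ⋯ 3• 1⁻ 2• 4• ⋯ (n−3)• (n−1)•`. -/
def ThetaO (n : ℕ) : PegPerm :=
  ((List.range ((n - 1) / 2)).map (fun i => (n - 2 * i, Deco.dot))) ++ [(1, Deco.minus)] ++
  ((List.range ((n - 1) / 2)).map (fun i => (2 + 2 * i, Deco.dot)))

/-- `Λ_e(n)` for even `n` and `t = n/2`:  `(t+1)⁺ t• (t+2)• (t−1)• ⋯ (n−1)• 2• n• 1•`. -/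
def LambdaE (n : ℕ) : PegPerm :=
  (List.range (n / 2)).flatMap
    (fun i => [(n / 2 + 1 + i, if i = 0 then Deco.plus else Deco.dot), (n / 2 - i, Deco.dot)])

/-- `Λ_o(n)` for odd `n` and `t = (n+1)/2`:  `t⁻ (t+1)• (t−1)• (t+2)• ⋯ (n−1)• 2• n• 1•`. -/
def LambdaO (n : ℕ) : PegPerm :=
  ((n + 1) / 2, Deco.minus) ::
    (List.range ((n + 1) / 2 - 1)).flatMap
      (fun i => [((n + 1) / 2 + 1 + i, Deco.dot), ((n + 1) / 2 - 1 - i, Deco.dot)])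
lemma reach_trans {α : Type*} {step : α → α → Prop} :
    ∀ {a b : ℕ} {x y z : α}, ReachIn step a x y → ReachIn step b y z → ReachIn step (a + b) x z := by
  intro a
  induction a with
  | zero => intro b x y z h1 h2; cases h1; simpa using h2
  | succ n ih =>
    intro b x y z h1 h2
    obtain ⟨w, hw, hr⟩ := h1
    have : n + 1 + b = (n + b) + 1 := by omega
    rw [this]
    exact ⟨w, hw, ih hr h2⟩

lemma pegSegReverse_length {l : PegPerm} {i j : ℕ} (hij : i ≤ j) (hj : j < l.length) :
    (pegSegReverse l i j).length = l.length := by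
  simp [pegSegReverse]
  omega

lemma pegRevStep_length {l l' : PegPerm} (h : PegRevStep l l') : l'.length = l.length := by
  obtain ⟨i, j, hij, hj, rfl⟩ := h
  exact pegSegReverse_length hij hj

lemma reach_length {k : ℕ} {l m : PegPerm} (h : ReachIn PegRevStep k l m) : m.length = l.length := by
  induction k generalizing l with
  | zero => cases h; rfl
  | succ n ih =>
    obtain ⟨z, hz, hr⟩ := h
    rw [ih hr, pegRevStep_length hz]

lemma pegSegReverse_cons (p : ℕ × Deco) (l : PegPerm) (i j : ℕ) :
    pegSegReverse (p :: l) (i + 1) (j + 1) = p :: pegSegReverse l i j := by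
  simp [pegSegReverse, Nat.succ_sub_succ]

lemma pegRevStep_cons {l l' : PegPerm} (p : ℕ × Deco) (h : PegRevStep l l') :
    PegRevStep (p :: l) (p :: l') := by
  obtain ⟨i, j, hij, hj, rfl⟩ := h
  exact ⟨i + 1, j + 1, by omega, by simpa using Nat.succ_lt_succ hj, (pegSegReverse_cons p l i j).symm⟩

lemma reach_cons {k : ℕ} {l m : PegPerm} (p : ℕ × Deco) (h : ReachIn PegRevStep k l m) :
    ReachIn PegRevStep k (p :: l) (p :: m) := by
  induction k generalizing l with
  | zero => cases h; rfl
  | succ n ih => obtain ⟨z, hz, hr⟩ := h; exact ⟨p :: z, pegRevStep_cons p hz, ih hr⟩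

lemma pegSegReverse_append {l : PegPerm} (l₂ : PegPerm) {i j : ℕ} (hij : i ≤ j) (hj : j < l.length) :
    pegSegReverse (l ++ l₂) i j = pegSegReverse l i j ++ l₂ := by
  unfold pegSegReverse
  rw [List.take_append_of_le_length (by omega), List.drop_append_of_le_length (by omega),
    List.drop_append_of_le_length (by omega),
    List.take_append_of_le_length (by simp; omega)]
  simp

lemma pegRevStep_append {l l' : PegPerm} (l₂ : PegPerm) (h : PegRevStep l l') :
    PegRevStep (l ++ l₂) (l' ++ l₂) := by
  obtain ⟨i, j, hij, hj, rfl⟩ := h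
  exact ⟨i, j, hij, by simp; omega, (pegSegReverse_append l₂ hij hj).symm⟩

lemma reach_append {k : ℕ} {l m : PegPerm} (l₂ : PegPerm) (h : ReachIn PegRevStep k l m) :
    ReachIn PegRevStep k (l ++ l₂) (m ++ l₂) := by
  induction k generalizing l with
  | zero => cases h; rfl
  | succ n ih => obtain ⟨z, hz, hr⟩ := h; exact ⟨z ++ l₂, pegRevStep_append l₂ hz, ih hr⟩

lemma pegSegReverse_map (g : ℕ → ℕ) (l : PegPerm) (i j : ℕ) :
    pegSegReverse (l.map (fun p => (g p.1, p.2))) i j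
      = (pegSegReverse l i j).map (fun p => (g p.1, p.2)) := by
  unfold pegSegReverse
  simp [← List.map_take, ← List.map_drop, List.map_map, Function.comp_def]

lemma pegRevStep_map {l l' : PegPerm} (g : ℕ → ℕ) (h : PegRevStep l l') :
    PegRevStep (l.map (fun p => (g p.1, p.2))) (l'.map (fun p => (g p.1, p.2))) := by
  obtain ⟨i, j, hij, hj, rfl⟩ := h
  exact ⟨i, j, hij, by simpa using hj, (pegSegReverse_map g l i j).symm⟩

lemma reach_map {k : ℕ} {l m : PegPerm} (g : ℕ → ℕ) (h : ReachIn PegRevStep k l m) :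
    ReachIn PegRevStep k (l.map (fun p => (g p.1, p.2))) (m.map (fun p => (g p.1, p.2))) := by
  induction k generalizing l with
  | zero => cases h; rfl
  | succ n ih => obtain ⟨z, hz, hr⟩ := h; exact ⟨_, pegRevStep_map g hz, ih hr⟩

lemma pegSegReverse_perm {l : PegPerm} {i j : ℕ} (hij : i ≤ j) :
    ((pegSegReverse l i j).map Prod.fst).Perm (l.map Prod.fst) := by
  conv_rhs => rw [← List.take_append_drop i l]
  conv_rhs => rw [← List.take_append_drop (j + 1 - i) (l.drop i)]
  rw [List.drop_drop] at *
  unfold pegSegReverse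
  have : i + (j + 1 - i) = j + 1 := by omega
  rw [this]
  simp only [List.map_append, List.map_reverse, List.map_map]
  rw [List.append_assoc]
  refine List.Perm.append_left _ (List.Perm.append_right _ ?_)
  have : (Prod.fst ∘ fun p : ℕ × Deco => (p.1, flipDeco p.2)) = Prod.fst := rfl
  rw [this]
  exact (List.reverse_perm _)

lemma pegSegReverse_last (m : PegPerm) (q : ℕ × Deco) :
    pegSegReverse (m ++ [q]) m.length m.length = m ++ [(q.1, flipDeco q.2)] := by
  unfold pegSegReverse
  simp

lemma idPerm_concat {n : ℕ} (hn : 1 ≤ n) : idPerm n = idPerm (n - 1) ++ [n] := by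
  unfold idPerm
  have h : n = (n - 1) + 1 := by omega
  rw [h, List.range'_concat]
  congr 2
  omega

lemma ReachIn.zero {α : Type*} {step : α → α → Prop} {x y : α} (h : x = y) :
    ReachIn step 0 x y := h

lemma sortable_aux : ∀ n (l : PegPerm), l.length = n → IsPermList (l.map Prod.fst) →
    ∃ k m, IsIdPeg m ∧ ReachIn PegRevStep k l m := by
  intro n
  induction n using Nat.strong_induction_on with
  | _ n ih =>
  intro l hlen hl
  rcases Nat.eq_zero_or_pos n with h0 | hpos
  · subst h0
    rw [List.length_eq_zero_iff] at hlen
    subst hlen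
    exact ⟨0, [], ⟨by simp [idPerm], by simp⟩, rfl⟩
  have hlmem : n ∈ l.map Prod.fst := by
    refine hl.mem_iff.mpr ?_
    simp only [List.length_map, hlen, idPerm, List.mem_range']
    exact ⟨n - 1, by omega, by omega⟩
  obtain ⟨p, hp, hpn⟩ := List.mem_iff_getElem.mp hlmem
  rw [List.length_map] at hp
  rw [List.getElem_map] at hpn
  have hstep1 : PegRevStep l (pegSegReverse l p (n - 1)) :=
    ⟨p, n - 1, by omega, by omega, rfl⟩
  set front : PegPerm :=
    l.take p ++ ((l.drop (p+1)).map (fun q => (q.1, flipDeco q.2))).reverse with hfront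
  have hl1 : pegSegReverse l p (n - 1) = front ++ [(n, flipDeco l[p].2)] := by
    unfold pegSegReverse
    have hd : l.drop p = l[p] :: l.drop (p + 1) := List.drop_eq_getElem_cons hp
    have ht : (l.drop p).take (n - 1 + 1 - p) = l.drop p := by
      apply List.take_of_length_le
      rw [List.length_drop]
      omega
    have hdropn : l.drop (n - 1 + 1) = [] := List.drop_eq_nil_of_le (by omega)
    rw [ht, hd, hdropn, List.append_nil, hfront]
    simp only [List.map_cons, List.reverse_cons, hpn, List.append_assoc]
  have hfrontlen : front.length = n - 1 := by
    simp [hfront]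
    omega
  have key : ∃ k₁ d₂, d₂ ≠ Deco.minus ∧ ReachIn PegRevStep k₁ l (front ++ [(n, d₂)]) := by
    rcases h : flipDeco l[p].2 with _ | _ | _
    · exact ⟨1, Deco.plus, by decide, _, hstep1, ReachIn.zero (by rw [hl1, h])⟩
    · refine ⟨2, Deco.plus, by decide, _, hstep1,
        front ++ [(n, Deco.plus)], ?_, ReachIn.zero rfl⟩
      rw [hl1, h]
      refine ⟨n - 1, n - 1, le_refl _, by simp [hfrontlen], ?_⟩
      have hlast := pegSegReverse_last front (n, Deco.minus)
      rw [hfrontlen] at hlast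
      rw [hlast]
      rfl
    · exact ⟨1, Deco.dot, by decide, _, hstep1, ReachIn.zero (by rw [hl1, h])⟩
  obtain ⟨k₁, d₂, hd₂, hreach1⟩ := key
  have hfp : IsPermList (front.map Prod.fst) := by
    have h1 : ((pegSegReverse l p (n-1)).map Prod.fst).Perm (l.map Prod.fst) :=
      pegSegReverse_perm (by omega)
    rw [hl1] at h1
    have h2 : (front.map Prod.fst ++ [n]).Perm (idPerm (n - 1) ++ [n]) := by
      have h3 := h1.trans hl
      rw [List.length_map, hlen, idPerm_concat hpos] at h3
      simpa using h3
    have h3 := (List.perm_append_right_iff [n]).mp h2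
    unfold IsPermList
    rwa [List.length_map, hfrontlen]
  obtain ⟨k₃, m₃, hm₃, hreach3⟩ := ih (n - 1) (by omega) front hfrontlen hfp
  have hm₃len : m₃.length = n - 1 := by rw [reach_length hreach3, hfrontlen]
  refine ⟨k₁ + k₃, m₃ ++ [(n, d₂)], ⟨?_, ?_⟩, reach_trans hreach1 (reach_append _ hreach3)⟩
  · rw [List.map_append, hm₃.1, hm₃len]
    simp only [List.length_append, List.length_singleton, hm₃len]
    have h1 : n - 1 + 1 = n := by omega
    rw [h1, idPerm_concat hpos]
    rfl
  · intro q hq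
    rcases List.mem_append.mp hq with h | h
    · exact hm₃.2 q h
    · rw [List.mem_singleton] at h
      subst h
      exact hd₂

lemma sortable (l : PegPerm) (hl : IsPermList (l.map Prod.fst)) :
    ∃ k m, IsIdPeg m ∧ ReachIn PegRevStep k l m := sortable_aux l.length l rfl hl

lemma getD_map' {α β : Type*} (f : α → β) {l : List α} {i : ℕ} (hi : i < l.length)
    (d : α) {d' : β} : (l.map f).getD i d' = f (l.getD i d) := by
  rw [List.getD_eq_getElem _ _ (by simpa using hi), List.getD_eq_getElem _ _ hi, List.getElem_map]

lemma range'_map_sub : ∀ (m s : ℕ), (List.range' (s+1) m).map (· - 1) = List.range' s m := by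
  intro m
  induction m with
  | zero => intro s; rfl
  | succ p ih =>
    intro s
    rw [List.range'_succ, List.range'_succ, List.map_cons, ih]
    simp

lemma range'_map_add : ∀ (m s : ℕ), (List.range' s m).map (· + 1) = List.range' (s+1) m := by
  intro m
  induction m with
  | zero => intro s; rfl
  | succ p ih =>
    intro s
    rw [List.range'_succ, List.range'_succ, List.map_cons, ih]

lemma idPerm_cons (m : ℕ) : idPerm (m + 1) = 1 :: List.range' 2 m := by
  unfold idPerm
  rw [List.range'_succ]

lemma mem_ge_one {l : PegPerm} (h : IsPermList (l.map Prod.fst)) {p : ℕ × Deco} (hp : p ∈ l) :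
    1 ≤ p.1 := by
  have h1 : p.1 ∈ l.map Prod.fst := List.mem_map_of_mem (f := Prod.fst) hp
  have h2 := h.mem_iff.mp h1
  rw [idPerm, List.mem_range'] at h2
  obtain ⟨i, _, hi⟩ := h2
  omega

lemma mem_PegBrd_of_reach {k k' : ℕ} {l m : PegPerm} (hperm : IsPegPermList l)
    (hid : IsIdPeg m) (hr : ReachIn PegRevStep k' l m) (hk : k' ≤ k) : l ∈ PegBrd k :=
  ⟨hperm, le_trans (Nat.sInf_le ⟨m, hid, hr⟩) hk⟩

lemma reach_of_mem_PegBrd {k : ℕ} {l : PegPerm} (h : l ∈ PegBrd k) :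
    ∃ k' ≤ k, ∃ m, IsIdPeg m ∧ ReachIn PegRevStep k' l m := by
  obtain ⟨hperm, hrd⟩ := h
  obtain ⟨k₀, m, hm, hr⟩ := sortable l hperm
  have hne : {j | ∃ m, IsIdPeg m ∧ ReachIn PegRevStep j l m}.Nonempty := ⟨k₀, m, hm, hr⟩
  exact ⟨pegRd l, hrd, Nat.sInf_mem hne⟩

lemma not_last {k : ℕ} {πε : PegPerm} (h : πε ∈ CCPegBasis (PegBrd k)) {d : Deco}
    (hd : d ≠ Deco.minus) : πε.getLastD pegDefault ≠ (πε.length, d) := by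
  obtain ⟨hperm, hcc, hnot, hmin⟩ := h
  intro heq
  have hne : πε ≠ [] := by
    intro he
    subst he
    exact hnot ⟨hperm,
      le_trans (Nat.sInf_le ⟨[], ⟨by simp [idPerm], by simp⟩, ReachIn.zero rfl⟩) (Nat.zero_le k)⟩
  set n := πε.length with hn
  have hnpos : 1 ≤ n := by rw [hn]; exact List.length_pos_iff.mpr hne
  have hlast : πε.getLast hne = (n, d) := by
    rw [List.getLastD_eq_getLast?, List.getLast?_eq_getLast hne] at heq
    simpa using heq
  set f := πε.dropLast with hf
  have hsplit : πε = f ++ [(n, d)] := by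
    conv_lhs => rw [← List.dropLast_append_getLast hne]
    rw [hlast]
  have hflen : f.length = n - 1 := by rw [hf, List.length_dropLast, ← hn]
  have hfperm : IsPegPermList f := by
    have h0 : (πε.map Prod.fst).Perm (idPerm (πε.map Prod.fst).length) := hperm
    rw [List.length_map, ← hn, hsplit, List.map_append, idPerm_concat hnpos] at h0
    have h2 := (List.perm_append_right_iff [n]).mp (by simpa using h0)
    unfold IsPegPermList IsPermList
    rwa [List.length_map, hflen]
  have hfcc : CleanCompact f := by
    intro i hi
    have h1 : πε.getD i pegDefault = f.getD i pegDefault := by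
      rw [hsplit]; exact List.getD_append _ _ _ _ (by omega)
    have h2 : πε.getD (i+1) pegDefault = f.getD (i+1) pegDefault := by
      rw [hsplit]; exact List.getD_append _ _ _ _ hi
    rw [← h1, ← h2]
    exact hcc i (by omega)
  have hfpat : IsPegPattern f πε := by
    refine ⟨f, ?_, ⟨rfl, fun i j _ _ => Iff.rfl⟩, fun i hi => ⟨fun hh => hh, fun hh => hh⟩⟩
    rw [hsplit]
    exact List.sublist_append_left f _
  have hfne : f ≠ πε := by
    intro he
    have := congrArg List.length he
    rw [hflen, ← hn] at this
    omega
  obtain ⟨k', hk', m, hm, hr⟩ := reach_of_mem_PegBrd (hmin f hfperm hfcc hfpat hfne)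
  have hmlen : m.length = n - 1 := by rw [reach_length hr, hflen]
  have hid : IsIdPeg (m ++ [(n, d)]) := by
    constructor
    · rw [List.map_append, hm.1, hmlen]
      simp only [List.length_append, List.length_singleton, hmlen]
      have h1 : n - 1 + 1 = n := by omega
      rw [h1, idPerm_concat hnpos]
      rfl
    · intro q hq
      rcases List.mem_append.mp hq with hq | hq
      · exact hm.2 q hq
      · rw [List.mem_singleton] at hq
        subst hq
        exact hd
  have hreach : ReachIn PegRevStep k' πε (m ++ [(n, d)]) := by
    rw [hsplit]
    exact reach_append _ hr
  exact hnot (mem_PegBrd_of_reach hperm hid hreach hk')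

lemma not_head {k : ℕ} {πε : PegPerm} (h : πε ∈ CCPegBasis (PegBrd k)) {d : Deco}
    (hd : d ≠ Deco.minus) : πε.headD pegDefault ≠ (1, d) := by
  obtain ⟨hperm, hcc, hnot, hmin⟩ := h
  intro heq
  have hne : πε ≠ [] := by
    intro he
    subst he
    have := congrArg Prod.fst heq
    simp [pegDefault] at this
  set n := πε.length with hn
  have hnpos : 1 ≤ n := by rw [hn]; exact List.length_pos_iff.mpr hne
  set t := πε.tail with ht
  have hsplit : πε = (1, d) :: t := by
    conv_lhs => rw [← List.cons_head_tail hne]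
    congr 1
    rw [List.headD_eq_head?, List.head?_eq_head hne] at heq
    simpa using heq
  have htlen : t.length = n - 1 := by rw [ht, List.length_tail, ← hn]
  have hge : ∀ q ∈ t, 1 ≤ q.1 := by
    intro q hq
    rw [ht] at hq
    exact mem_ge_one hperm (List.mem_of_mem_tail hq)
  have hgeD : ∀ i, i < t.length → 1 ≤ (t.getD i pegDefault).1 := by
    intro i hi
    rw [List.getD_eq_getElem _ _ hi]
    exact hge _ (List.getElem_mem hi)
  have hidn : idPerm n = 1 :: List.range' 2 (n - 1) := by
    have h0 := idPerm_cons (n - 1)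
    rwa [show n - 1 + 1 = n from by omega] at h0
  have h1 : (πε.map Prod.fst).Perm (idPerm (πε.map Prod.fst).length) := hperm
  rw [List.length_map, ← hn, hsplit, hidn, List.map_cons] at h1
  have htperm : (t.map Prod.fst).Perm (List.range' 2 (n - 1)) := h1.cons_inv
  set γ : PegPerm := t.map (fun p => (p.1 - 1, p.2)) with hγ
  have hγfst : γ.map Prod.fst = (t.map Prod.fst).map (· - 1) := by
    rw [hγ, List.map_map, List.map_map]
    rfl
  have hγlen : γ.length = n - 1 := by rw [hγ, List.length_map, htlen]
  have hγperm : IsPegPermList γ := by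
    unfold IsPegPermList IsPermList idPerm
    rw [List.length_map, hγlen, hγfst]
    have h2 := htperm.map (· - 1)
    rwa [range'_map_sub (n-1) 1] at h2
  have hγcc : CleanCompact γ := by
    intro i hi
    rw [hγlen] at hi
    intro hs
    rw [hγ, getD_map' _ (show i < t.length by omega) pegDefault,
      getD_map' _ (show i + 1 < t.length by omega) pegDefault] at hs
    refine hcc (i+1) (by omega) ?_
    rw [hsplit, List.getD_cons_succ, List.getD_cons_succ]
    have ha := hgeD i (by omega)
    have hb := hgeD (i+1) (by omega)
    unfold StripPair at hs ⊢
    dsimp only at hs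
    rcases hs with ⟨hv, h2, h3⟩ | ⟨hv, h2, h3⟩
    · exact Or.inl ⟨by omega, h2, h3⟩
    · exact Or.inr ⟨by omega, h2, h3⟩
  have hγpat : IsPegPattern γ πε := by
    refine ⟨t, by rw [hsplit]; exact List.sublist_cons_self _ _, ⟨by simp [hγ], ?_⟩, ?_⟩
    · intro i j hi hj
      simp only [List.length_map] at hi hj
      rw [hγfst]
      rw [getD_map' (· - 1) (by simpa using hi) 0, getD_map' (· - 1) (by simpa using hj) 0]
      rw [getD_map' Prod.fst hi pegDefault, getD_map' Prod.fst hj pegDefault]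
      have ha := hgeD i hi
      have hb := hgeD j hj
      omega
    · intro i hi
      constructor <;> intro hh <;>
        · rw [hγ, getD_map' _ (show i < t.length by simpa using hi) pegDefault]
          exact hh
  have hγne : γ ≠ πε := by
    intro he
    have := congrArg List.length he
    rw [hγlen, ← hn] at this
    omega
  obtain ⟨k', hk', m, hm, hr⟩ := reach_of_mem_PegBrd (hmin γ hγperm hγcc hγpat hγne)
  have hmap := reach_map (· + 1) hr
  have hback : γ.map (fun p => (p.1 + 1, p.2)) = t := by
    rw [hγ, List.map_map]
    conv_rhs => rw [← List.map_id t]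
    apply List.map_congr_left
    intro a ha
    have h1 : a.1 - 1 + 1 = a.1 := by have := hge a ha; omega
    simp [Function.comp_def, h1]
  rw [hback] at hmap
  have hreach : ReachIn PegRevStep k' πε ((1, d) :: m.map (fun p => (p.1 + 1, p.2))) := by
    rw [hsplit]
    exact reach_cons _ hmap
  have hmlen : m.length = n - 1 := by rw [reach_length hr, hγlen]
  have hid : IsIdPeg ((1, d) :: m.map (fun p => (p.1 + 1, p.2))) := by
    constructor
    · rw [List.map_cons, List.map_map]
      have hcomp : m.map (Prod.fst ∘ fun p : ℕ × Deco => (p.1 + 1, p.2))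
          = (m.map Prod.fst).map (· + 1) := by
        rw [List.map_map]; rfl
      rw [hcomp, hm.1, hmlen]
      have h2 : (idPerm (n-1)).map (· + 1) = List.range' 2 (n - 1) := range'_map_add (n-1) 1
      rw [h2]
      have h3 : ((1, d) :: m.map (fun p => (p.1 + 1, p.2))).length = n := by
        simp only [List.length_cons, List.length_map, hmlen]
        omega
      rw [h3, hidn]
    · intro q hq
      rcases List.mem_cons.mp hq with rfl | hq
      · exact hd
      · obtain ⟨p, hp, rfl⟩ := List.mem_map.mp hq
        exact hm.2 p hp
  exact hnot (mem_PegBrd_of_reach hperm hid hreach hk')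

/-- a clean compact peg basis permutation of `B̂_k^{rd}` neither begins
with `1` decorated `+` or `•` nor ends with its maximum decorated `+` or `•`. -/
theorem basis_first_last (k : ℕ) (πε : PegPerm) (h : πε ∈ CCPegBasis (PegBrd k)) :
    πε.headD pegDefault ≠ (1, Deco.plus) ∧ πε.headD pegDefault ≠ (1, Deco.dot) ∧
    πε.getLastD pegDefault ≠ (πε.length, Deco.plus) ∧
    πε.getLastD pegDefault ≠ (πε.length, Deco.dot) :=
  ⟨not_head h (by decide), not_head h (by decide),
   not_last h (by decide), not_last h (by decide)⟩
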